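/- Let S be a commutative ring with complete family of pairwise orthogonal idempotents e_1, ..., e_k, and let K ⊆ S^n be an S-submodule with K = ⊕_i e_i K_i for S-submodules K_i of S^n. Then the Euclidean dual satisfies K^⊥ = ⊕_i e_i (K_i^⊥), where duals are taken with respect to the standard bilinear form on S^n. -/

import Mathlib

/-- The Euclidean dual of a submodule of S^n. -/
def eucDual {S : Type*} [CommRing S] {n : ℕ} (K : Submodule S (Fin n → S)) :
    Submodule S (Fin n → S) where
  carrier := {x | ∀ y ∈ K, ∑ j, x j * y j = 0}
  zero_mem' := by intro y hy; simp
  add_mem' := by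
    intro x x' hx hx' y hy
    simp only [Pi.add_apply, add_mul, Finset.sum_add_distrib, hx y hy, hx' y hy, add_zero]
  smul_mem' := by
    intro c x hx y hy
    simp only [Pi.smul_apply, smul_eq_mul, mul_assoc, ← Finset.mul_sum, hx y hy, mul_zero]

lemma mem_eucDual {S : Type*} [CommRing S] {n : ℕ} {K : Submodule S (Fin n → S)}
    {x : Fin n → S} : x ∈ eucDual K ↔ ∀ y ∈ K, ∑ j, x j * y j = 0 := Iff.rfl

/-- If K = ⊕ e_i K_i for a complete family of pairwise orthogonal idempotents, then
K^⊥ = ⊕ e_i (K_i^⊥). -/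
theorem stmt_4 (S : Type*) [CommRing S] (k n : ℕ) (e : Fin k → S)
    (hidem : ∀ i, e i * e i = e i)
    (horth : ∀ i j, i ≠ j → e i * e j = 0)
    (hsum : ∑ i, e i = 1)
    (K : Submodule S (Fin n → S)) (K' : Fin k → Submodule S (Fin n → S))
    (hK : K = ⨆ i, (K' i).map (LinearMap.lsmul S (Fin n → S) (e i))) :
    eucDual K = ⨆ i, (eucDual (K' i)).map (LinearMap.lsmul S (Fin n → S) (e i)) := by
  subst hK
  apply le_antisymm
  · intro x hx
    have key : ∀ i, e i • x ∈ (eucDual (K' i)).map (LinearMap.lsmul S (Fin n → S) (e i)) := by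
      intro i
      refine ⟨e i • x, ?_, ?_⟩
      · intro y hy
        have hy' : e i • y ∈ ⨆ j, (K' j).map (LinearMap.lsmul S (Fin n → S) (e j)) :=
          Submodule.mem_iSup_of_mem i ⟨y, hy, rfl⟩
        have h0 := hx _ hy'
        calc ∑ j, (e i • x) j * y j = ∑ j, x j * (e i • y) j := by
              simp only [Pi.smul_apply, smul_eq_mul]
              exact Finset.sum_congr rfl fun j _ => by ring
            _ = 0 := h0
      · show e i • e i • x = e i • x
        rw [smul_smul, hidem]
    have hxsum : x = ∑ i, e i • x := by
      rw [← Finset.sum_smul, hsum, one_smul]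
    rw [hxsum]
    exact Submodule.sum_mem _ fun i _ => Submodule.mem_iSup_of_mem i (key i)
  · refine iSup_le fun i => ?_
    rintro _ ⟨x, hx, rfl⟩
    intro y hy
    refine Submodule.iSup_induction _ (motive := fun y => ∑ j, (LinearMap.lsmul S (Fin n → S) (e i) x) j * y j = 0) hy ?_ (by simp) ?_
    · rintro m _ ⟨z, hz, rfl⟩
      show ∑ j, (e i • x) j * (e m • z) j = 0
      have key : ∑ j, (e i • x) j * (e m • z) j = (e i * e m) * ∑ j, x j * z j := by
        rw [Finset.mul_sum]
        refine Finset.sum_congr rfl fun j _ => ?_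
        simp only [Pi.smul_apply, smul_eq_mul]; ring
      rcases eq_or_ne i m with h | h
      · subst h
        rw [key, hx z hz, mul_zero]
      · rw [key, horth i m h, zero_mul]
    · intro a b ha hb
      simp only [Pi.add_apply, mul_add, Finset.sum_add_distrib, ha, hb, add_zero]
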